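/- Let L ⊆ Σ^ω be recognised by a nice history-deterministic coBüchi automaton A. Let R₁,…,R_m be the distinct residuals of L, with R₁ the residual recognised by the initial state; for each j let Q^{R_j} be the set of states of A recognising R_j. Let (S₁,Δ₁),…,(S_k,Δ_k) be the safe components of A and set n_j = max_{1≤i≤k} |S_i ∩ Q^{R_j}|. Let B be the generalised coBüchi automaton with state set Q = P₁ ⊎ … ⊎ P_m where P_j = {p_j^1,…,p_j^{n_j}}, initial state p_1^1, transition set Δ containing (p,a,p') for all p ∈ P_j and p' ∈ P_{j'} whenever A has a transition (q,a,q') with q ∈ Q^{R_j} and q' ∈ Q^{R_{j'}}, colour set {1,…,k} and acceptance genCoBuchi({1,…,k}), whose colouring is defined as follows: for each i ∈ {1,…,k} fix an injective morphism of automaton structures φ_i : (S_i,Δ_i) → (Q,Δ) with φ_i(q) ∈ P_j whenever q ∈ Q^{R_j} (one exists), and set col(e) = {i : e is not the image under φ_i of any transition of Δ_i}. Then B is history-deterministic and L(B) = L. -/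

import Mathlib

/-- A transition of an automaton: source state, input letter, output colour,
destination state.  (Acceptance is transition-based.) -/
structure AutTrans (Q A Γ : Type) where
  src : Q
  lab : A
  out : Γ
  dst : Q

/-- An (ω-)automaton with finite state set `Q`, input alphabet `A`,
output alphabet `Γ`, initial state `init`, transition set `delta` and
acceptance condition `acc ⊆ Γ^ω`. -/
structure Automaton (A Γ : Type) where
  Q : Type
  fin : Fintype Q
  init : Q
  delta : Set (AutTrans Q A Γ)
  acc : Set (ℕ → Γ)

/-- The generalised Büchi condition over the colour set `C`
(output alphabet `𝒫(C)`): every colour appears infinitely often. -/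
def genBuchi (C : Type) : Set (ℕ → Set C) :=
  {f | ∀ c : C, ∀ n : ℕ, ∃ m : ℕ, n ≤ m ∧ c ∈ f m}

/-- The generalised coBüchi condition over the colour set `C`:
some colour appears only finitely often. -/
def genCoBuchi (C : Type) : Set (ℕ → Set C) :=
  {f | ∃ c : C, ∃ n : ℕ, ∀ m : ℕ, n ≤ m → c ∉ f m}

namespace Automaton

variable {A Γ : Type}

/-- Number of states. -/
def size (M : Automaton A Γ) : ℕ := @Fintype.card M.Q M.fin

/-- `ρ` is a run of `M` on the word `w`, starting in the state `q`. -/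
def IsRunFrom (M : Automaton A Γ) (q : M.Q) (w : ℕ → A)
    (ρ : ℕ → AutTrans M.Q A Γ) : Prop :=
  (ρ 0).src = q ∧ ∀ n : ℕ, ρ n ∈ M.delta ∧ (ρ n).lab = w n ∧ (ρ n).dst = (ρ (n + 1)).src

/-- The language of `M` with initial state `q`. -/
def LangFrom (M : Automaton A Γ) (q : M.Q) : Set (ℕ → A) :=
  {w | ∃ ρ : ℕ → AutTrans M.Q A Γ, M.IsRunFrom q w ρ ∧ (fun n => (ρ n).out) ∈ M.acc}

/-- The language of `M`. -/
def Lang (M : Automaton A Γ) : Set (ℕ → A) := M.LangFrom M.init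

/-- For every state and letter there is at most one outgoing transition. -/
def Deterministic (M : Automaton A Γ) : Prop :=
  ∀ t ∈ M.delta, ∀ t' ∈ M.delta, t.src = t'.src → t.lab = t'.lab → t = t'

/-- For every state and letter there is at least one outgoing transition. -/
def Complete (M : Automaton A Γ) : Prop :=
  ∀ (p : M.Q) (a : A), ∃ t ∈ M.delta, t.src = p ∧ t.lab = a

/-- The infinite sequence of transitions chosen by a resolver `r` on the word `w`
(`r` is applied to all nonempty finite prefixes of `w`). -/
def resRun (M : Automaton A Γ) (r : List A → AutTrans M.Q A Γ) (w : ℕ → A) :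
    ℕ → AutTrans M.Q A Γ :=
  fun n => r (List.ofFn fun i : Fin (n + 1) => w i)

/-- `r` is a resolver for `M`: on every word it induces a run,
which is accepting whenever the word is in the language of `M`. -/
def IsResolver (M : Automaton A Γ) (r : List A → AutTrans M.Q A Γ) : Prop :=
  ∀ w : ℕ → A, M.IsRunFrom M.init w (M.resRun r w) ∧
    (w ∈ M.Lang → (fun n => (M.resRun r w n).out) ∈ M.acc)

/-- History-determinism: existence of a resolver. -/
def HistoryDeterministic (M : Automaton A Γ) : Prop := ∃ r, M.IsResolver r

/-- `M` admits a resolver such that every state occurs on some accepting run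
induced by the resolver. -/
def ResolverTrim (M : Automaton A Γ) : Prop :=
  ∃ r, M.IsResolver r ∧ ∀ q : M.Q, ∃ w ∈ M.Lang, ∃ n : ℕ, (M.resRun r w n).src = q

/-- Reachability along transitions of `M`. -/
def Reach (M : Automaton A Γ) (p q : M.Q) : Prop :=
  Relation.ReflTransGen (fun x y => ∃ t ∈ M.delta, t.src = x ∧ t.dst = y) p q

/-- Nondeterministic choices lead to language-equivalent states. -/
def SemanticallyDeterministic (M : Automaton A Γ) : Prop :=
  ∀ t ∈ M.delta, ∀ t' ∈ M.delta, t.src = t'.src → t.lab = t'.lab →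
    M.LangFrom t.dst = M.LangFrom t'.dst

/- CoBüchi notions: a coBüchi automaton has output alphabet `Set Unit`
(`𝒫(C)` with `|C| = 1`); a transition is a coBüchi transition iff its output
is `{()}` (i.e. `() ∈ out`), and safe iff its output is `∅`. -/

/-- A safe (non-coBüchi) transition from `p` to `q`. -/
def SafeStep (M : Automaton A (Set Unit)) (p q : M.Q) : Prop :=
  ∃ t ∈ M.delta, t.src = p ∧ t.dst = q ∧ () ∉ t.out

/-- `p` and `q` lie in the same safe component (same SCC of the safe graph). -/
def SafeConn (M : Automaton A (Set Unit)) (p q : M.Q) : Prop :=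
  Relation.ReflTransGen M.SafeStep p q ∧ Relation.ReflTransGen M.SafeStep q p

/-- The safe component (as a set of states) of `q`. -/
def safeComponentOf (M : Automaton A (Set Unit)) (q : M.Q) : Set M.Q :=
  {p | M.SafeConn p q}

/-- `(S, D)` is a safe component of `M`, given with its set of safe transitions. -/
def IsSafeComponent (M : Automaton A (Set Unit)) (S : Set M.Q)
    (D : Set (AutTrans M.Q A (Set Unit))) : Prop :=
  (∃ q : M.Q, S = M.safeComponentOf q) ∧
    D = {t | t ∈ M.delta ∧ t.src ∈ S ∧ t.dst ∈ S ∧ () ∉ t.out}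

/-- The safe language of the state `q`: words labelling an infinite safe path from `q`. -/
def SafeLang (M : Automaton A (Set Unit)) (q : M.Q) : Set (ℕ → A) :=
  {w | ∃ ρ : ℕ → AutTrans M.Q A (Set Unit),
    M.IsRunFrom q w ρ ∧ ∀ n : ℕ, () ∉ (ρ n).out}

/-- The automaton restricted to safe transitions is deterministic. -/
def SafeDeterministic (M : Automaton A (Set Unit)) : Prop :=
  ∀ t ∈ M.delta, ∀ t' ∈ M.delta, () ∉ t.out → () ∉ t'.out →
    t.src = t'.src → t.lab = t'.lab → t = t'

/-- Every transition joining two distinct safe components is a coBüchi transition. -/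
def NormalForm (M : Automaton A (Set Unit)) : Prop :=
  ∀ t ∈ M.delta, () ∉ t.out → M.SafeConn t.src t.dst

/-- A coBüchi automaton is nice if all states are reachable and it is
semantically deterministic, in normal form, and safe deterministic. -/
def Nice (M : Automaton A (Set Unit)) : Prop :=
  (∀ q : M.Q, M.Reach M.init q) ∧ M.SemanticallyDeterministic ∧
    M.NormalForm ∧ M.SafeDeterministic

/-- Equivalent states with equal safe languages are equal. -/
def SafeMinimal (M : Automaton A (Set Unit)) : Prop :=
  ∀ p q : M.Q, M.LangFrom p = M.LangFrom q → M.SafeLang p = M.SafeLang q → p = q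

/-- Equivalent states with safe languages comparable for inclusion lie in the
same safe component. -/
def SafeCentralised (M : Automaton A (Set Unit)) : Prop :=
  ∀ p q : M.Q, M.LangFrom p = M.LangFrom q →
    (M.SafeLang p ⊆ M.SafeLang q ∨ M.SafeLang q ⊆ M.SafeLang p) → M.SafeConn p q

end Automaton

/-- The word `u · w`. -/
def wordAppend {A : Type} (u : List A) (w : ℕ → A) : ℕ → A :=
  fun n => if h : n < u.length then u.get ⟨n, h⟩ else w (n - u.length)

/-- The residual `u⁻¹L`. -/
def residualLang {A : Type} (u : List A) (L : Set (ℕ → A)) : Set (ℕ → A) :=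
  {w | wordAppend u w ∈ L}

/-- `L` is prefix-independent: `u⁻¹L = L` for every finite word `u`. -/
def PrefixIndependent {A : Type} (L : Set (ℕ → A)) : Prop :=
  ∀ u : List A, residualLang u L = L

/-- The local alphabet `Σ_R` at the residual `R`: nonempty finite words `v`
with `v⁻¹R = R` such that no proper nonempty prefix `v'` of `v`
satisfies `v'⁻¹R = R`.  (For `R = u⁻¹L` this says `(uv)⁻¹L = u⁻¹L` and
`(uv')⁻¹L ≠ u⁻¹L` for proper nonempty prefixes.) -/
def localAlphabet {A : Type} (R : Set (ℕ → A)) : Set (List A) :=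
  {v | v ≠ [] ∧ residualLang v R = R ∧
    ∀ v' : List A, v' <+: v → v' ≠ [] → v' ≠ v → residualLang v' R ≠ R}

/-- `PathCol M q w X p`: there is a finite path of `M` from `q` to `p`
labelled by `w` whose transitions produce exactly the set of colours `X`
(the union of the outputs along the path). -/
inductive PathCol {A C : Type} (M : Automaton A (Set C)) :
    M.Q → List A → Set C → M.Q → Prop
  | nil (q : M.Q) : PathCol M q [] ∅ q
  | cons {q r : M.Q} {a : A} {w : List A} {X : Set C}
      (t : AutTrans M.Q A (Set C)) (ht : t ∈ M.delta) (hsrc : t.src = q)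
      (hlab : t.lab = a) (htail : PathCol M t.dst w X r) :
      PathCol M q (a :: w) (t.out ∪ X) r

/-- The localisation `A|_R` of a generalised coBüchi automaton `M` to the
residual `R`, with initial state `q0`: states are the states of `M`
recognising `R`, the alphabet is `Σ_R`, and there is a transition
`q →^{w:X} p` for every finite path of `M` from `q` to `p` labelled by
`w ∈ Σ_R` producing the set of colours `X`. -/
noncomputable def localAut {A C : Type} (M : Automaton A (Set C)) (R : Set (ℕ → A))
    (q0 : {q : M.Q // M.LangFrom q = R}) :
    Automaton (↥(localAlphabet R)) (Set C) where
  Q := {q : M.Q // M.LangFrom q = R}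
  fin := by
    letI := M.fin
    classical
    infer_instance
  init := q0
  delta := {t | PathCol M t.src.1 t.lab.1 t.out t.dst.1}
  acc := genCoBuchi C

/-- The automaton `M` with initial state `q`. -/
def withInit {A Γ : Type} (M : Automaton A Γ) (q : M.Q) : Automaton A Γ :=
  { M with init := q }

/-- Recolour the automaton `M` via `f`, keeping states, initial state and the
underlying transitions, and replacing the acceptance condition by `acc'`. -/
def recolor {A Γ Γ' : Type} (M : Automaton A Γ) (f : AutTrans M.Q A Γ → Γ')
    (acc' : Set (ℕ → Γ')) : Automaton A Γ' where
  Q := M.Q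
  fin := M.fin
  init := M.init
  delta := {t' | ∃ t ∈ M.delta, t'.src = t.src ∧ t'.lab = t.lab ∧ t'.out = f t ∧ t'.dst = t.dst}
  acc := acc'

/-- Concatenation of the first `k` blocks of a sequence of finite words. -/
def flattenPrefix {A : Type} (u : ℕ → List A) (k : ℕ) : List A :=
  (List.ofFn fun i : Fin k => u i).flatten

/-- `x ∈ A^ω` is the concatenation of the infinite sequence of finite words `u`. -/
def IsFlatten {A : Type} (u : ℕ → List A) (x : ℕ → A) : Prop :=
  ∀ (k n : ℕ) (h : n < (flattenPrefix u k).length),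
    (flattenPrefix u k).get ⟨n, h⟩ = x n

/-- Cascade composition `B ∘ M`: the outputs of `M` are fed as inputs to `B`. -/
def composeAut {A Γ Γ' : Type} (B : Automaton Γ Γ') (M : Automaton A Γ) :
    Automaton A Γ' where
  Q := M.Q × B.Q
  fin := by letI := M.fin; letI := B.fin; infer_instance
  init := (M.init, B.init)
  delta := {t | ∃ tM ∈ M.delta, ∃ tB ∈ B.delta,
    t.src = (tM.src, tB.src) ∧ t.lab = tM.lab ∧ tB.lab = tM.out ∧
    t.out = tB.out ∧ t.dst = (tM.dst, tB.dst)}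
  acc := B.acc

/-- The language `L_G = ⋂_v L_v` associated with a graph `G`: words over the
vertices such that for every vertex `v`, either the factor `vv` occurs
infinitely often, or letters outside the closed neighbourhood `N[v]` occur
infinitely often. -/
def LG {V : Type} (G : SimpleGraph V) : Set (ℕ → V) :=
  {w | ∀ v : V, (∀ n : ℕ, ∃ m : ℕ, n ≤ m ∧ w m = v ∧ w (m + 1) = v) ∨
      (∀ n : ℕ, ∃ m : ℕ, n ≤ m ∧ w m ≠ v ∧ ¬ G.Adj v (w m))}


namespace Stmt7A

def scons {A : Type} (a : A) (x : ℕ → A) : ℕ → A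
  | 0 => a
  | t+1 => x t

def shift {A : Type} (w : ℕ → A) (n : ℕ) : ℕ → A := fun t => w (n + t)

theorem shift_zero {A : Type} (w : ℕ → A) : shift w 0 = w := by
  funext t; simp [shift]

theorem scons_shift {A : Type} (w : ℕ → A) (n : ℕ) :
    scons (w n) (shift w (n+1)) = shift w n := by
  funext t
  cases t with
  | zero => rfl
  | succ t => show w (n+1+t) = w (n+(t+1)); exact congrArg w (by omega)

theorem prepend {A C : Type} {M : Automaton A (Set C)} (hacc : M.acc = genCoBuchi C)
    {t : AutTrans M.Q A (Set C)} (ht : t ∈ M.delta) {x : ℕ → A}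
    (hx : x ∈ M.LangFrom t.dst) : scons t.lab x ∈ M.LangFrom t.src := by
  obtain ⟨ρ, ⟨h0, hρ⟩, hout⟩ := hx
  refine ⟨scons t ρ, ⟨rfl, fun n => ?_⟩, ?_⟩
  · cases n with
    | zero => exact ⟨ht, rfl, h0.symm⟩
    | succ n => exact ⟨(hρ n).1, (hρ n).2.1, (hρ n).2.2⟩
  · rw [hacc] at hout ⊢
    obtain ⟨c, n0, hc⟩ := hout
    refine ⟨c, n0 + 1, fun mm hm => ?_⟩
    cases mm with
    | zero => omega
    | succ mm => exact hc mm (by omega)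

theorem safe_mem {A : Type} {M : Automaton A (Set Unit)} (hacc : M.acc = genCoBuchi Unit)
    {q : M.Q} {x : ℕ → A} (h : x ∈ M.SafeLang q) : x ∈ M.LangFrom q := by
  obtain ⟨ρ, hrun, hsafe⟩ := h
  exact ⟨ρ, hrun, by rw [hacc]; exact ⟨(), 0, fun m _ => hsafe m⟩⟩

theorem safeConn_refl {A : Type} (M : Automaton A (Set Unit)) (q : M.Q) :
    M.SafeConn q q := ⟨.refl, .refl⟩

theorem safeConn_symm {A : Type} {M : Automaton A (Set Unit)} {p q : M.Q}
    (h : M.SafeConn p q) : M.SafeConn q p := ⟨h.2, h.1⟩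

theorem safeConn_trans {A : Type} {M : Automaton A (Set Unit)} {p q r : M.Q}
    (h : M.SafeConn p q) (h' : M.SafeConn q r) : M.SafeConn p r :=
  ⟨h.1.trans h'.1, h'.2.trans h.2⟩

theorem sCO_eq {A : Type} {M : Automaton A (Set Unit)} {p q : M.Q}
    (h : M.SafeConn p q) : M.safeComponentOf p = M.safeComponentOf q :=
  Set.ext fun x => ⟨fun hx => safeConn_trans hx h, fun hx => safeConn_trans hx (safeConn_symm h)⟩

noncomputable def chooseIdx {α β : Type*} (S : α → Set β) (S' : Set β)
    (h : ∃ i, S i = S') : α := h.choose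

theorem chooseIdx_spec {α β : Type*} (S : α → Set β) (S' : Set β)
    (h : ∃ i, S i = S') : S (chooseIdx S S' h) = S' := h.choose_spec

theorem chooseIdx_congr {α β : Type*} (S : α → Set β) {S1 S2 : Set β} (h : S1 = S2)
    (h1 : ∃ i, S i = S1) (h2 : ∃ i, S i = S2) :
    chooseIdx S S1 h1 = chooseIdx S S2 h2 := by subst h; rfl

def pref {A : Type} (w : ℕ → A) (n : ℕ) : List A := List.ofFn fun i : Fin n => w i

theorem pref_succ {A : Type} (w : ℕ → A) (n : ℕ) :
    pref w (n+1) = (pref w n).concat (w n) := by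
  rw [pref, List.ofFn_succ']
  simp [pref]

theorem pref_dropLast {A : Type} (w : ℕ → A) (n : ℕ) :
    (pref w (n+1)).dropLast = pref w n := by
  rw [pref_succ, List.concat_eq_append]; exact List.dropLast_concat

theorem pref_getLastD {A : Type} (w : ℕ → A) (n : ℕ) (a0 : A) :
    (pref w (n+1)).getLastD a0 = w n := by
  rw [pref_succ, List.concat_eq_append]; exact List.getLastD_concat

theorem pref_length {A : Type} (w : ℕ → A) (n : ℕ) : (pref w n).length = n := by
  simp [pref]

theorem pref_ne_nil {A : Type} (w : ℕ → A) (n : ℕ) : pref w (n+1) ≠ [] := by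
  intro h
  have := pref_length w (n+1)
  rw [h] at this
  simp at this

end Stmt7A

/-- correctness, general case: the generalised coBüchi automaton
built from a nice HD coBüchi automaton for `L` by taking `n_j` copies of each
residual `R_j` (where `n_j` is the maximal number of states recognising `R_j`
in a safe component), with all residual-consistent transitions, coloured so
that colour `i` marks the transitions not in the image of the `i`-th safe
component, is history-deterministic and recognises `L`. -/
theorem stmt_7 {A : Type} (L : Set (ℕ → A))
    (M : Automaton A (Set Unit)) (hacc : M.acc = genCoBuchi Unit)
    (hnice : M.Nice) (hhd : M.HistoryDeterministic) (hlang : M.Lang = L)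
    (m : ℕ) (R : Fin m → Set (ℕ → A)) (hRinj : Function.Injective R)
    (hRres : ∀ j, ∃ u : List A, R j = residualLang u L)
    (hRall : ∀ u : List A, ∃ j, residualLang u L = R j)
    (j0 : Fin m) (hj0 : R j0 = L)
    (k : ℕ) (S : Fin k → Set M.Q) (D : Fin k → Set (AutTrans M.Q A (Set Unit)))
    (hcomp : ∀ i, M.IsSafeComponent (S i) (D i))
    (hall : ∀ (S' : Set M.Q) (D' : Set (AutTrans M.Q A (Set Unit))),
      M.IsSafeComponent S' D' → ∃ i, S i = S' ∧ D i = D')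
    (n : Fin m → ℕ)
    (hub : ∀ (i : Fin k) (j : Fin m), (S i ∩ {q | M.LangFrom q = R j}).ncard ≤ n j)
    (hex : ∀ j : Fin m, ∃ i : Fin k, (S i ∩ {q | M.LangFrom q = R j}).ncard = n j)
    (pinit : Fin (n j0))
    (φ : Fin k → M.Q → (Σ j : Fin m, Fin (n j)))
    (hφmem : ∀ i : Fin k, ∀ q ∈ S i, R (φ i q).1 = M.LangFrom q)
    (hφinj : ∀ i, Set.InjOn (φ i) (S i)) :
    let B : Automaton A (Set (Fin k)) :=
      { Q := Σ j : Fin m, Fin (n j),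
        fin := inferInstance,
        init := ⟨j0, pinit⟩,
        delta := {t | (∃ s ∈ M.delta, M.LangFrom s.src = R t.src.1 ∧
                        s.lab = t.lab ∧ M.LangFrom s.dst = R t.dst.1) ∧
                  t.out = {i | ¬ ∃ s ∈ D i,
                    φ i s.src = t.src ∧ s.lab = t.lab ∧ φ i s.dst = t.dst}},
        acc := genCoBuchi (Fin k) }
    B.HistoryDeterministic ∧ B.Lang = L := by
  classical
  intro B
  open Stmt7A in
  obtain ⟨rM, hrM⟩ := hhd
  set a0 := (rM []).lab with ha0
  -- description of D i
  have hD : ∀ i, D i = {t | t ∈ M.delta ∧ t.src ∈ S i ∧ t.dst ∈ S i ∧ () ∉ t.out} :=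
    fun i => (hcomp i).2
  -- canonical output set
  set cOut : B.Q → A → B.Q → Set (Fin k) := fun p a p' =>
    {i | ¬ ∃ s ∈ D i, φ i s.src = p ∧ s.lab = a ∧ φ i s.dst = p'} with hcOut
  have hBdelta : ∀ t : AutTrans B.Q A (Set (Fin k)), t ∈ B.delta ↔
      ((∃ s ∈ M.delta, M.LangFrom s.src = R t.src.1 ∧
        s.lab = t.lab ∧ M.LangFrom s.dst = R t.dst.1) ∧
       t.out = cOut t.src t.lab t.dst) := fun t => Iff.rfl
  have hBinit1 : (B.init).1 = j0 := rfl
  -- Part 1 : B.Lang ⊆ L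
  have hsub : B.Lang ⊆ L := by
    intro w hw
    obtain ⟨ρ, ⟨hρ0, hρ⟩, hout⟩ := hw
    obtain ⟨i, N, hi⟩ := (hout : (fun nn => (ρ nn).out) ∈ genCoBuchi (Fin k))
    have hex2 : ∀ t : ℕ, ∃ s, s ∈ D i ∧ φ i s.src = (ρ (N+t)).src ∧
        s.lab = (ρ (N+t)).lab ∧ φ i s.dst = (ρ (N+t)).dst := by
      intro t
      have h1 := hi (N+t) (Nat.le_add_right _ _)
      have h2 := ((hBdelta (ρ (N+t))).1 (hρ (N+t)).1).2
      have h1' : i ∉ (ρ (N+t)).out := h1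
      rw [h2] at h1'
      exact not_not.mp h1'
    choose σ hσD hσ1 hσ2 hσ3 using hex2
    have hmem : ∀ t, σ t ∈ M.delta ∧ (σ t).src ∈ S i ∧ (σ t).dst ∈ S i ∧ () ∉ (σ t).out := by
      intro t
      have h3 := hσD t
      rwa [hD] at h3
    have hchain : ∀ t, (σ t).dst = (σ (t+1)).src := by
      intro t
      apply hφinj i (hmem t).2.2.1 (hmem (t+1)).2.1
      rw [hσ3 t, hσ1 (t+1)]
      exact (hρ (N+t)).2.2
    have hsafe : Stmt7A.shift w N ∈ M.SafeLang (σ 0).src := by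
      refine ⟨σ, ⟨rfl, fun t => ⟨(hmem t).1, ?_, hchain t⟩⟩, fun t => (hmem t).2.2.2⟩
      rw [hσ2 t]
      exact (hρ (N+t)).2.1
    have hRN : Stmt7A.shift w N ∈ R ((ρ N).src).1 := by
      have h4 := Stmt7A.safe_mem hacc hsafe
      rw [← hφmem i (σ 0).src (hmem 0).2.1] at h4
      rwa [hσ1 0] at h4
    have down : ∀ d, Stmt7A.shift w (N - d) ∈ R ((ρ (N - d)).src).1 := by
      intro d
      induction d with
      | zero => exact hRN
      | succ d ih =>
        rcases le_or_gt N d with hd | hd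
        · rw [show N - (d+1) = N - d by omega]; exact ih
        · have hlt : N - (d+1) + 1 = N - d := by omega
          obtain ⟨⟨s, hsδ, hs1, hs2, hs3⟩, -⟩ := (hBdelta (ρ (N-(d+1)))).1 (hρ (N-(d+1))).1
          have hx : Stmt7A.shift w (N-(d+1)+1) ∈ M.LangFrom s.dst := by
            rw [hs3, (hρ (N-(d+1))).2.2, hlt]
            exact ih
          have h5 := Stmt7A.prepend hacc hsδ hx
          rw [hs1, hs2, (hρ (N-(d+1))).2.1] at h5
          rwa [Stmt7A.scons_shift] at h5
    have h6 := down N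
    rw [Nat.sub_self, Stmt7A.shift_zero, hρ0] at h6
    rw [hBinit1, hj0] at h6
    exact h6
  -- choice of safe-component indices
  have exI : ∀ q : M.Q, ∃ i, S i = M.safeComponentOf q := by
    intro q
    obtain ⟨i, h1, _⟩ := hall (M.safeComponentOf q)
      {t | t ∈ M.delta ∧ t.src ∈ M.safeComponentOf q ∧ t.dst ∈ M.safeComponentOf q ∧ () ∉ t.out}
      ⟨⟨q, rfl⟩, rfl⟩
    exact ⟨i, h1⟩
  set iOf : M.Q → Fin k := fun q => Stmt7A.chooseIdx S (M.safeComponentOf q) (exI q) with hiOfdef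
  have hiOf : ∀ q, S (iOf q) = M.safeComponentOf q := fun q => Stmt7A.chooseIdx_spec _ _ _
  set ψ : M.Q → B.Q := fun q => φ (iOf q) q with hψdef
  have hqmem : ∀ q, q ∈ S (iOf q) := fun q => by
    rw [hiOf q]; exact Stmt7A.safeConn_refl M q
  have hψR : ∀ q, R (ψ q).1 = M.LangFrom q := fun q => hφmem (iOf q) q (hqmem q)
  -- states of the resolver run of M
  set qn : (ℕ → A) → ℕ → M.Q := fun w nn =>
    if nn = 0 then M.init else (rM (Stmt7A.pref w nn)).dst with hqndef
  have hdstM : ∀ (w : ℕ → A) (nn : ℕ), (M.resRun rM w nn).dst = qn w (nn+1) := by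
    intro w nn
    simp only [hqndef, Nat.succ_ne_zero, if_false]
    rfl
  have hsrcM : ∀ (w : ℕ → A) (nn : ℕ), (M.resRun rM w nn).src = qn w nn := by
    intro w nn
    cases nn with
    | zero => exact (hrM w).1.1
    | succ nn =>
      have := ((hrM w).1.2 nn).2.2
      rw [← this, hdstM]
  -- the resolver for B
  set rB : List A → AutTrans B.Q A (Set (Fin k)) := fun u =>
    let p : B.Q := if u.length ≤ 1 then B.init else ψ ((rM u.dropLast).dst)
    let p' : B.Q := ψ (if u = [] then M.init else (rM u).dst)
    let a : A := u.getLastD a0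
    ⟨p, a, cOut p a p', p'⟩ with hrBdef
  have hrBsrc0 : ∀ w : ℕ → A, (B.resRun rB w 0).src = B.init := by
    intro w
    show (if (Stmt7A.pref w 1).length ≤ 1 then B.init
      else ψ ((rM (Stmt7A.pref w 1).dropLast).dst)) = B.init
    rw [Stmt7A.pref_length]
    rfl
  have hrBsrc : ∀ (w : ℕ → A) (nn : ℕ), (B.resRun rB w (nn+1)).src = ψ (qn w (nn+1)) := by
    intro w nn
    show (if (Stmt7A.pref w (nn+2)).length ≤ 1 then B.init
      else ψ ((rM (Stmt7A.pref w (nn+2)).dropLast).dst)) = _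
    rw [Stmt7A.pref_length, if_neg (by omega), Stmt7A.pref_dropLast]
    simp only [hqndef, Nat.succ_ne_zero, if_false]
  have hrBlab : ∀ (w : ℕ → A) (nn : ℕ), (B.resRun rB w nn).lab = w nn := by
    intro w nn
    show (Stmt7A.pref w (nn+1)).getLastD a0 = w nn
    exact Stmt7A.pref_getLastD w nn a0
  have hrBdst : ∀ (w : ℕ → A) (nn : ℕ), (B.resRun rB w nn).dst = ψ (qn w (nn+1)) := by
    intro w nn
    show ψ (if Stmt7A.pref w (nn+1) = [] then M.init else (rM (Stmt7A.pref w (nn+1))).dst) = _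
    rw [if_neg (Stmt7A.pref_ne_nil w nn)]
    simp only [hqndef, Nat.succ_ne_zero, if_false]
  have hrBout : ∀ (w : ℕ → A) (nn : ℕ), (B.resRun rB w nn).out =
      cOut (B.resRun rB w nn).src (B.resRun rB w nn).lab (B.resRun rB w nn).dst := by
    intro w nn; rfl
  -- run property
  have hrun : ∀ w : ℕ → A, B.IsRunFrom B.init w (B.resRun rB w) := by
    intro w
    refine ⟨hrBsrc0 w, fun nn => ⟨?_, hrBlab w nn, ?_⟩⟩
    · rw [hBdelta]
      refine ⟨⟨M.resRun rM w nn, ((hrM w).1.2 nn).1, ?_, ?_, ?_⟩, hrBout w nn⟩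
      · cases nn with
        | zero =>
          rw [hrBsrc0 w, hBinit1, hj0, ← hlang, hsrcM w 0]
          rfl
        | succ nn =>
          rw [hrBsrc w nn, hψR, hsrcM]
      · rw [((hrM w).1.2 nn).2.1, hrBlab]
      · rw [hrBdst w nn, hψR, hdstM]
    · rw [hrBdst w nn, hrBsrc w nn]
  -- acceptance
  have haccB : ∀ w : ℕ → A, w ∈ M.Lang →
      (fun nn => (B.resRun rB w nn).out) ∈ genCoBuchi (Fin k) := by
    intro w hw
    have hMacc := (hrM w).2 hw
    rw [hacc] at hMacc
    obtain ⟨c, N, hc⟩ := hMacc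
    have hcu : ∀ mm, N ≤ mm → () ∉ (M.resRun rM w mm).out := by
      intro mm h; cases c; exact hc mm h
    have hconn : ∀ nn, N ≤ nn → M.SafeConn (qn w N) (qn w nn) := by
      intro nn h
      induction nn, h using Nat.le_induction with
      | base => exact Stmt7A.safeConn_refl M _
      | succ nn h ih =>
        refine Stmt7A.safeConn_trans ih ?_
        have := hnice.2.2.1 (M.resRun rM w nn) ((hrM w).1.2 nn).1 (hcu nn h)
        rwa [hsrcM, hdstM] at this
    set istar := iOf (qn w N) with histar
    have hqnS : ∀ nn, N ≤ nn → qn w nn ∈ S istar := by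
      intro nn h
      rw [histar, hiOf]
      exact Stmt7A.safeConn_symm (hconn nn h)
    have hψeq : ∀ nn, N ≤ nn → ψ (qn w nn) = φ istar (qn w nn) := by
      intro nn h
      show φ (iOf (qn w nn)) (qn w nn) = _
      rw [show iOf (qn w nn) = istar from
        Stmt7A.chooseIdx_congr S (Stmt7A.sCO_eq (Stmt7A.safeConn_symm (hconn nn h))) _ _]
    refine ⟨istar, N+1, fun mm hm => ?_⟩
    show istar ∉ (B.resRun rB w mm).out
    rw [hrBout]
    intro hmem
    apply hmem
    obtain ⟨mm, rfl⟩ : ∃ mm', mm = mm' + 1 := ⟨mm - 1, by omega⟩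
    refine ⟨M.resRun rM w (mm+1), ?_, ?_, ?_, ?_⟩
    · rw [hD]
      exact ⟨((hrM w).1.2 (mm+1)).1,
        by rw [hsrcM]; exact hqnS _ (by omega),
        by rw [hdstM]; exact hqnS _ (by omega),
        hcu _ (by omega)⟩
    · rw [hsrcM, hrBsrc, hψeq _ (by omega)]
    · rw [((hrM w).1.2 (mm+1)).2.1, hrBlab]
    · rw [hdstM, hrBdst, hψeq _ (by omega)]
  refine ⟨⟨rB, fun w => ⟨hrun w, fun hw => ?_⟩⟩, ?_⟩
  · exact haccB w (by rw [hlang]; exact hsub hw)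
  · refine Set.Subset.antisymm hsub fun w hw => ?_
    exact ⟨B.resRun rB w, hrun w, haccB w (by rwa [hlang])⟩
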